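/- Let a < b and c < d be real numbers, and let g : ℝ → ℝ map [a,b] bijectively onto [c,d], with inverse h : ℝ → ℝ (so h(g(x)) = x for x ∈ [a,b] and g(h(y)) = y for y ∈ [c,d]). Assume there is g' : ℝ → ℝ such that for every x ∈ [a,b], g has derivative g'(x) at x within [a,b]; assume h is continuous on [c,d] and differentiable at every point of the open interval (c,d); and assume f : ℝ → ℝ is continuous on [c,d]. Then a function F : ℝ → ℝ is a primitive of f on [c,d] if and only if there exists a primitive H of the function x ↦ f(g(x))·g'(x) on [a,b] such that F(y) = H(h(y)) for all y ∈ [c,d]. -/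

import Mathlib

theorem stmt8 (a b c d : ℝ) (hab : a < b) (hcd : c < d) (g h : ℝ → ℝ)
    (hgm : Set.MapsTo g (Set.Icc a b) (Set.Icc c d))
    (hhm : Set.MapsTo h (Set.Icc c d) (Set.Icc a b))
    (hinv1 : ∀ x ∈ Set.Icc a b, h (g x) = x)
    (hinv2 : ∀ y ∈ Set.Icc c d, g (h y) = y)
    (g' : ℝ → ℝ)
    (hg : ∀ x ∈ Set.Icc a b, HasDerivWithinAt g (g' x) (Set.Icc a b) x)
    (hhc : ContinuousOn h (Set.Icc c d))
    (hhd : ∀ y ∈ Set.Ioo c d, DifferentiableAt ℝ h y)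
    (f : ℝ → ℝ) (hf : ContinuousOn f (Set.Icc c d)) (F : ℝ → ℝ) :
    (∀ y ∈ Set.Icc c d, HasDerivWithinAt F (f y) (Set.Icc c d) y) ↔
      ∃ H : ℝ → ℝ,
        (∀ x ∈ Set.Icc a b, HasDerivWithinAt H (f (g x) * g' x) (Set.Icc a b) x) ∧
        ∀ y ∈ Set.Icc c d, F y = H (h y) := by
  constructor
  · intro hF
    refine ⟨F ∘ g, fun x hx => ?_, fun y hy => ?_⟩
    · exact (hF (g x) (hgm hx)).comp x (hg x hx) hgm
    · rw [Function.comp_apply, hinv2 y hy]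
  · rintro ⟨H, hH, hFH⟩
    -- continuous extension of f
    set fc : ℝ → ℝ := fun y => f ((Set.projIcc c d hcd.le y : ℝ)) with hfc_def
    have hfc : Continuous fc := by
      apply hf.comp_continuous (continuous_projIcc.subtype_val)
      intro x; exact (Set.projIcc c d hcd.le x).2
    have hfc_eq : ∀ y ∈ Set.Icc c d, fc y = f y := by
      intro y hy
      simp [hfc_def, Set.projIcc_of_mem hcd.le hy]
    -- explicit primitive F₀
    set F₀ : ℝ → ℝ := fun y => ∫ t in c..y, fc t with hF₀_def
    have hF₀ : ∀ y : ℝ, HasDerivAt F₀ (fc y) y := fun y =>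
      (intervalIntegral.integral_hasStrictDerivAt_right (hfc.intervalIntegrable c y)
        (hfc.stronglyMeasurableAtFilter _ _) hfc.continuousAt).hasDerivAt
    -- F₀ ∘ g is a primitive of (f ∘ g) * g' on [a,b]
    have hH₀ : ∀ x ∈ Set.Icc a b, HasDerivWithinAt (F₀ ∘ g) (f (g x) * g' x) (Set.Icc a b) x := by
      intro x hx
      have := ((hF₀ (g x)).hasDerivWithinAt (s := Set.Icc c d)).comp x (hg x hx) hgm
      rwa [hfc_eq (g x) (hgm hx)] at this
    -- H - F₀ ∘ g has zero derivative within [a,b], hence is constant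
    have hconst : ∀ x ∈ Set.Icc a b, H x - F₀ (g x) = H a - F₀ (g a) := by
      intro x hx
      have key : ∀ z ∈ Set.Icc a b,
          HasDerivWithinAt (fun u => H u - F₀ (g u)) 0 (Set.Icc a b) z := by
        intro z hz
        have := (hH z hz).sub (hH₀ z hz)
        rw [sub_self] at this
        exact this
      have ha : a ∈ Set.Icc a b := Set.left_mem_Icc.2 hab.le
      have := (convex_Icc a b).norm_image_sub_le_of_norm_hasDerivWithin_le
        (C := 0) (f' := fun _ => (0 : ℝ)) key (fun z _ => by simp) ha hx
      simp only [mul_comm] at this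
      have h0 : |(H x - F₀ (g x)) - (H a - F₀ (g a))| ≤ 0 := by
        simpa [Real.norm_eq_abs] using this
      have := abs_nonpos_iff.mp h0
      linarith
    -- hence F = F₀ + C on [c,d]
    set C : ℝ := H a - F₀ (g a) with hC
    have hFeq : ∀ y ∈ Set.Icc c d, F y = F₀ y + C := by
      intro y hy
      have h1 := hFH y hy
      have h2 := hconst (h y) (hhm hy)
      rw [hinv2 y hy] at h2
      linarith
    intro y hy
    have : HasDerivWithinAt (fun z => F₀ z + C) (f y) (Set.Icc c d) y := by
      have := ((hF₀ y).hasDerivWithinAt (s := Set.Icc c d)).add_const C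
      rwa [hfc_eq y hy] at this
    exact this.congr (fun z hz => hFeq z hz) (hFeq y hy)
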